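/- Let φ : S → L^p(Ω) be a disintegration and C ⊆ S an almost norm-maximizing chain. Then the subvector-infimum g of φ[C] exists, g is the L^p-norm limit of φ(ν) as ν traverses C in increasing order, and g is either 0 or an atom of the subvector order. -/

import Mathlib

open MeasureTheory

/-- `f` is a subvector of `g`: `f = g · χ_A` a.e. for some measurable set `A`. -/
def Subvec {α : Type*} [MeasurableSpace α] {μ : Measure α} {p : ENNReal}
    (f g : Lp ℂ p μ) : Prop :=
  ∃ A : Set α, MeasurableSet A ∧ (f : α → ℂ) =ᵐ[μ] A.indicator (g : α → ℂ)

/-- `g` is an atom of the subvector order. -/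
def SubvecAtom {α : Type*} [MeasurableSpace α] {μ : Measure α} {p : ENNReal}
    (g : Lp ℂ p μ) : Prop :=
  g ≠ 0 ∧ ∀ h : Lp ℂ p μ, Subvec h g → h = 0 ∨ h = g

/-- `S ⊆ ℕ*` is a tree: closed under initial segments. -/
def IsTree (S : Set (List ℕ)) : Prop :=
  ∀ ν ∈ S, ∀ ν' : List ℕ, ν' <+: ν → ν' ∈ S

/-- `φ` is summative on `S`. -/
def Summative {α : Type*} [MeasurableSpace α] {μ : Measure α} {p : ENNReal}
    [Fact (1 ≤ p)] (S : Set (List ℕ)) (φ : List ℕ → Lp ℂ p μ) : Prop :=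
  ∀ ν ∈ S, (∃ k : ℕ, ν ++ [k] ∈ S) →
    HasSum (fun k : {k : ℕ // ν ++ [k] ∈ S} => φ (ν ++ [k.1])) (φ ν)

/-- `φ` is separating on `S`. -/
def Separating {α : Type*} [MeasurableSpace α] {μ : Measure α} {p : ENNReal}
    (S : Set (List ℕ)) (φ : List ℕ → Lp ℂ p μ) : Prop :=
  ∀ ν ∈ S, ∀ ν' ∈ S, ¬ ν <+: ν' → ¬ ν' <+: ν →
    (φ ν : _ → ℂ) * (φ ν' : _ → ℂ) =ᵐ[μ] 0

/-- `φ : S → L^p(Ω)` is a disintegration: injective, non-vanishing, summative, separating,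
with linearly dense range. -/
def Disintegration {α : Type*} [MeasurableSpace α] {μ : Measure α} {p : ENNReal}
    [Fact (1 ≤ p)] (S : Set (List ℕ)) (φ : List ℕ → Lp ℂ p μ) : Prop :=
  IsTree S ∧ Set.InjOn φ S ∧ (∀ ν ∈ S, φ ν ≠ 0) ∧ Summative S φ ∧ Separating S φ ∧
    Dense ((Submodule.span ℂ (φ '' S) : Submodule ℂ (Lp ℂ p μ)) : Set (Lp ℂ p μ))

/-- `C ⊆ S` is an almost norm-maximizing chain for `φ` (with exponent `pr`). -/
def ANMChain {α : Type*} [MeasurableSpace α] {μ : Measure α} {p : ENNReal} [Fact (1 ≤ p)]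
    (pr : ℝ) (S : Set (List ℕ)) (φ : List ℕ → Lp ℂ p μ) (C : Set (List ℕ)) : Prop :=
  C ⊆ S ∧ IsChain (· <+: ·) C ∧
    ∀ ν ∈ C, (∃ k : ℕ, ν ++ [k] ∈ S) →
      ∃ k : ℕ, ν ++ [k] ∈ C ∧
        ∀ k' : ℕ, ν ++ [k'] ∈ S →
          ‖φ (ν ++ [k'])‖ ^ pr ≤ ‖φ (ν ++ [k])‖ ^ pr + 2 ^ (-((ν.length + 1 : ℕ) : ℝ))

open Filter Set Topology
open scoped ENNReal NNReal
namespace Stmt17Aux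

variable {α : Type*} [MeasurableSpace α] {μ : Measure α} {q : ENNReal}

theorem subvec_refl (f : Lp ℂ q μ) : Subvec f f :=
  ⟨Set.univ, MeasurableSet.univ, by simp⟩

theorem subvec_trans {f g h : Lp ℂ q μ} (h1 : Subvec f g) (h2 : Subvec g h) : Subvec f h := by
  obtain ⟨A, hA, hfA⟩ := h1
  obtain ⟨B, hB, hgB⟩ := h2
  refine ⟨A ∩ B, hA.inter hB, ?_⟩
  filter_upwards [hfA, hgB] with x e1 e2
  by_cases hxA : x ∈ A <;> by_cases hxB : x ∈ B <;>
    simp_all [Set.indicator_apply, Set.mem_inter_iff]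

theorem measurableSet_ne (f : Lp ℂ q μ) : MeasurableSet {x | f x ≠ 0} := by
  have h := (Lp.stronglyMeasurable f).measurable (MeasurableSet.compl (measurableSet_singleton (0:ℂ)))
  convert h using 1
  rfl

theorem coeFn_sum_range [Fact (1 ≤ q)] (ψ : ℕ → Lp ℂ q μ) (n : ℕ) :
    (↑(∑ j ∈ Finset.range n, ψ j) : α → ℂ) =ᵐ[μ] fun x => ∑ j ∈ Finset.range n, (ψ j : α → ℂ) x := by
  induction n with
  | zero => simp only [Finset.sum_range_zero]; exact Lp.coeFn_zero ℂ q μ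
  | succ n ih =>
    rw [Finset.sum_range_succ]
    filter_upwards [Lp.coeFn_add (∑ j ∈ Finset.range n, ψ j) (ψ n), ih] with x e1 e2
    rw [e1, Pi.add_apply, e2]
    simp [Finset.sum_range_succ]

section NormLemmas

variable {p : ℝ} [Fact (1 ≤ ENNReal.ofReal p)]

theorem lint_lt_top (hp : 1 ≤ p) (f : Lp ℂ (ENNReal.ofReal p) μ) :
    (∫⁻ x, (‖f x‖₊ : ℝ≥0∞) ^ p ∂μ) < ⊤ := by
  simp only [← enorm_eq_nnnorm]
  have hp0 : (0:ℝ) < p := lt_of_lt_of_le one_pos hp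
  have hP0 : ENNReal.ofReal p ≠ 0 := (ENNReal.ofReal_pos.2 hp0).ne'
  have h := Lp.eLpNorm_lt_top f
  rw [eLpNorm_eq_lintegral_rpow_enorm_toReal hP0 ENNReal.ofReal_ne_top,
    ENNReal.toReal_ofReal hp0.le] at h
  by_contra hcon
  push_neg at hcon
  rw [top_le_iff] at hcon
  rw [hcon, ENNReal.top_rpow_of_pos (by positivity : (0:ℝ) < 1/p)] at h
  exact absurd h (lt_irrefl _)

theorem norm_rpow_eq (hp : 1 ≤ p) (f : Lp ℂ (ENNReal.ofReal p) μ) :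
    ‖f‖ ^ p = (∫⁻ x, (‖f x‖₊ : ℝ≥0∞) ^ p ∂μ).toReal := by
  simp only [← enorm_eq_nnnorm]
  have hp0 : (0:ℝ) < p := lt_of_lt_of_le one_pos hp
  have hP0 : ENNReal.ofReal p ≠ 0 := (ENNReal.ofReal_pos.2 hp0).ne'
  rw [Lp.norm_def, eLpNorm_eq_lintegral_rpow_enorm_toReal hP0 ENNReal.ofReal_ne_top,
    ENNReal.toReal_ofReal hp0.le, ENNReal.toReal_rpow, ← ENNReal.rpow_mul, one_div,
    inv_mul_cancel₀ hp0.ne', ENNReal.rpow_one]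

theorem subvec_norm_add (hp : 1 ≤ p) {f g : Lp ℂ (ENNReal.ofReal p) μ} (hfg : Subvec f g) :
    ‖f‖ ^ p + ‖g - f‖ ^ p = ‖g‖ ^ p := by
  obtain ⟨A, hA, hf⟩ := hfg
  have hp0 : (0:ℝ) < p := lt_of_lt_of_le one_pos hp
  have e1 : (fun x => (‖f x‖₊ : ℝ≥0∞) ^ p) =ᵐ[μ]
      A.indicator (fun x => (‖g x‖₊ : ℝ≥0∞) ^ p) := by
    filter_upwards [hf] with x h
    by_cases hx : x ∈ A <;>
      simp [Set.indicator_apply, hx, h, ENNReal.zero_rpow_of_pos hp0]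
  have e2 : (fun x => (‖(g - f) x‖₊ : ℝ≥0∞) ^ p) =ᵐ[μ]
      Aᶜ.indicator (fun x => (‖g x‖₊ : ℝ≥0∞) ^ p) := by
    filter_upwards [Lp.coeFn_sub g f, hf] with x h1 h2
    rw [h1, Pi.sub_apply, h2]
    by_cases hx : x ∈ A <;>
      simp [Set.indicator_apply, hx, ENNReal.zero_rpow_of_pos hp0]
  have hfin1 : (∫⁻ x in A, (‖g x‖₊ : ℝ≥0∞) ^ p ∂μ) ≠ ⊤ :=
    (lt_of_le_of_lt (lintegral_mono' Measure.restrict_le_self le_rfl) (lint_lt_top hp g)).ne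
  have hfin2 : (∫⁻ x in Aᶜ, (‖g x‖₊ : ℝ≥0∞) ^ p ∂μ) ≠ ⊤ :=
    (lt_of_le_of_lt (lintegral_mono' Measure.restrict_le_self le_rfl) (lint_lt_top hp g)).ne
  rw [norm_rpow_eq hp f, norm_rpow_eq hp (g - f), norm_rpow_eq hp g,
    lintegral_congr_ae e1, lintegral_congr_ae e2,
    lintegral_indicator hA _, lintegral_indicator hA.compl _,
    ← ENNReal.toReal_add hfin1 hfin2, lintegral_add_compl _ hA]

theorem subvec_norm_le (hp : 1 ≤ p) {f g : Lp ℂ (ENNReal.ofReal p) μ} (hfg : Subvec f g) :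
    ‖f‖ ≤ ‖g‖ := by
  have hp0 : (0:ℝ) < p := lt_of_lt_of_le one_pos hp
  have h := subvec_norm_add hp hfg
  have h2 : ‖f‖ ^ p ≤ ‖g‖ ^ p := by
    have := Real.rpow_nonneg (norm_nonneg (g - f)) p
    linarith
  by_contra hlt
  push_neg at hlt
  exact absurd h2 (not_le.2 (Real.rpow_lt_rpow (norm_nonneg g) hlt hp0))

theorem subvec_norm_sub (hp : 1 ≤ p) {f g : Lp ℂ (ENNReal.ofReal p) μ} (hfg : Subvec f g) :
    ‖g - f‖ ^ p = ‖g‖ ^ p - ‖f‖ ^ p := by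
  have h := subvec_norm_add hp hfg; linarith

end NormLemmas

theorem subvec_limit [Fact (1 ≤ q)] {F g : Lp ℂ q μ} {h : ℕ → Lp ℂ q μ}
    (hsub : ∀ n, Subvec (h n) F) (htd : Tendsto h atTop (𝓝 g)) : Subvec g F := by
  obtain ⟨ns, -, hae⟩ := (tendstoInMeasure_of_tendsto_Lp htd).exists_seq_tendsto_ae
  choose A hA hAe using hsub
  refine ⟨{x | g x ≠ 0}, measurableSet_ne g, ?_⟩
  filter_upwards [hae, ae_all_iff.2 hAe] with x hx hAx
  by_cases hgx : g x = 0
  · simp [hgx, Set.indicator_apply]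
  · have hev : ∀ᶠ i in atTop, h (ns i) x = F x := by
      filter_upwards [hx.eventually_ne hgx] with i hi
      have h2 := hAx (ns i)
      rw [h2] at hi ⊢
      by_cases hxa : x ∈ A (ns i) <;> simp_all [Set.indicator_apply]
    have h3 : Tendsto (fun i => h (ns i) x) atTop (𝓝 (F x)) :=
      Tendsto.congr' (by filter_upwards [hev] with i hi; exact hi.symm) tendsto_const_nhds
    have hFx := tendsto_nhds_unique hx h3
    simp [Set.indicator_apply, hgx, ← hFx]

theorem sibling_not_prefix {ν : List ℕ} {j k : ℕ} (hjk : j ≠ k) :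
    ¬ (ν ++ [j] <+: ν ++ [k]) := by
  intro h
  have h2 := h.eq_of_length (by simp)
  simp only [List.append_cancel_left_eq, List.cons.injEq] at h2
  exact hjk h2.1

theorem subvec_child [Fact (1 ≤ q)] {S : Set (List ℕ)} {φ : List ℕ → Lp ℂ q μ}
    (hsum : Summative S φ) (hsep : Separating S φ) {ν : List ℕ} {k : ℕ}
    (hν : ν ∈ S) (hk : ν ++ [k] ∈ S) : Subvec (φ (ν ++ [k])) (φ ν) := by
  classical
  have hs := hsum ν hν ⟨k, hk⟩
  have hs2 : HasSum ({j | ν ++ [j] ∈ S}.indicator fun j => φ (ν ++ [j])) (φ ν) :=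
    (hasSum_subtype_iff_indicator
      (f := fun j => φ (ν ++ [j])) (s := {j | ν ++ [j] ∈ S})).mp hs
  set ψ : ℕ → Lp ℂ q μ := {j | ν ++ [j] ∈ S}.indicator fun j => φ (ν ++ [j]) with hψ
  obtain ⟨ns, hns, hae⟩ :=
    (tendstoInMeasure_of_tendsto_Lp hs2.tendsto_sum_nat).exists_seq_tendsto_ae
  have hsep_ae : ∀ᵐ x ∂μ, ∀ j : ℕ, (ν ++ [j]) ∈ S → j ≠ k →
      φ (ν ++ [j]) x * φ (ν ++ [k]) x = 0 := by
    rw [ae_all_iff]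
    intro j
    by_cases hj : (ν ++ [j]) ∈ S ∧ j ≠ k
    · filter_upwards [hsep _ hj.1 _ hk (sibling_not_prefix hj.2)
        (sibling_not_prefix (Ne.symm hj.2))] with x hx _ _
      simpa using hx
    · exact Filter.Eventually.of_forall fun x h1 h2 => absurd ⟨h1, h2⟩ hj
  have hzero_ae : ∀ᵐ x ∂μ, ∀ j : ℕ, (ν ++ [j]) ∉ S → (ψ j : α → ℂ) x = 0 := by
    rw [ae_all_iff]
    intro j
    by_cases hj : (ν ++ [j]) ∈ S
    · exact Filter.Eventually.of_forall fun x h1 => absurd hj h1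
    · have : ψ j = 0 := Set.indicator_of_notMem hj _
      filter_upwards [Lp.coeFn_zero ℂ q μ] with x hx _
      rw [this, hx]
      rfl
  have hcoe_ae : ∀ᵐ x ∂μ, ∀ n : ℕ,
      (↑(∑ j ∈ Finset.range n, ψ j) : α → ℂ) x = ∑ j ∈ Finset.range n, (ψ j : α → ℂ) x :=
    ae_all_iff.2 fun n => coeFn_sum_range ψ n
  refine ⟨{x | φ (ν ++ [k]) x ≠ 0}, measurableSet_ne _, ?_⟩
  filter_upwards [hae, hsep_ae, hzero_ae, hcoe_ae] with x hx hsx hzx hcx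
  by_cases h0 : φ (ν ++ [k]) x = 0
  · simp [Set.indicator_apply, h0]
  · have hψk : ψ k = φ (ν ++ [k]) := Set.indicator_of_mem (by exact hk) _
    have heval : ∀ᶠ i in atTop, (↑(∑ j ∈ Finset.range (ns i), ψ j) : α → ℂ) x
        = φ (ν ++ [k]) x := by
      have hev : ∀ᶠ i in atTop, k < ns i := by
        filter_upwards [Filter.eventually_gt_atTop k] with i hi
        exact lt_of_lt_of_le hi (hns.le_apply)
      filter_upwards [hev] with i hi
      rw [hcx (ns i), Finset.sum_eq_single_of_mem k (Finset.mem_range.2 hi)]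
      · rw [hψk]
      · intro j _ hjk
        by_cases hjs : (ν ++ [j]) ∈ S
        · have hj2 : ψ j = φ (ν ++ [j]) := Set.indicator_of_mem (by exact hjs) _
          rw [hj2]
          exact (mul_eq_zero.mp (hsx j hjs hjk)).resolve_right h0
        · exact hzx j hjs
    have h1 : Tendsto (fun i => (↑(∑ j ∈ Finset.range (ns i), ψ j) : α → ℂ) x) atTop
        (𝓝 (φ (ν ++ [k]) x)) :=
      Tendsto.congr' (heval.mono fun i hi => hi.symm) tendsto_const_nhds
    have h2 := tendsto_nhds_unique hx h1
    have hxmem : x ∈ {x | (φ (ν ++ [k]) : α → ℂ) x ≠ 0} := h0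
    rw [Set.indicator_of_mem hxmem]
    exact h2.symm

theorem subvec_prefix [Fact (1 ≤ q)] {S : Set (List ℕ)} {φ : List ℕ → Lp ℂ q μ}
    (hT : IsTree S) (hsum : Summative S φ) (hsep : Separating S φ) :
    ∀ ν' : List ℕ, ν' ∈ S → ∀ ν : List ℕ, ν <+: ν' → Subvec (φ ν') (φ ν) := by
  intro ν'
  induction ν' using List.reverseRecOn with
  | nil =>
    intro _ ν hν
    rw [List.prefix_nil.mp hν]
    exact subvec_refl _
  | append_singleton l a ih =>
    intro hmem ν hν
    rcases eq_or_ne ν (l ++ [a]) with rfl | hne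
    · exact subvec_refl _
    · have hlen : ν.length ≤ l.length := by
        have h1 := hν.length_le
        simp only [List.length_append, List.length_singleton] at h1
        rcases Nat.lt_or_ge ν.length (l.length + 1) with h | h
        · omega
        · exact absurd (hν.eq_of_length (by simp; omega)) hne
      have hνl : ν <+: l := by
        have h2 := List.prefix_iff_eq_take.mp hν
        rw [List.take_append_of_le_length hlen] at h2
        rw [h2]
        exact List.take_prefix _ _
      have hl : l ∈ S := hT _ hmem l ⟨[a], rfl⟩
      exact subvec_trans (subvec_child hsum hsep hl hmem) (ih hl ν hνl)

section Ind

variable {P : ENNReal} [Fact (1 ≤ P)] {A : Set α}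

noncomputable def indLp (hA : MeasurableSet A) (f : Lp ℂ P μ) : Lp ℂ P μ :=
  ((Lp.memLp f).indicator hA).toLp (A.indicator f)

theorem indLp_coeFn (hA : MeasurableSet A) (f : Lp ℂ P μ) :
    (indLp hA f : α → ℂ) =ᵐ[μ] A.indicator ⇑f :=
  MemLp.coeFn_toLp _

theorem indLp_add (hA : MeasurableSet A) (f g : Lp ℂ P μ) :
    indLp hA (f + g) = indLp hA f + indLp hA g := by
  apply Lp.ext
  filter_upwards [indLp_coeFn hA (f + g), indLp_coeFn hA f, indLp_coeFn hA g,
    Lp.coeFn_add f g, Lp.coeFn_add (indLp hA f) (indLp hA g)] with x h1 h2 h3 h4 h5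
  rw [h1, h5, Pi.add_apply, h2, h3]
  by_cases hx : x ∈ A <;> simp_all [Set.indicator_apply]

theorem indLp_smul (hA : MeasurableSet A) (c : ℂ) (f : Lp ℂ P μ) :
    indLp hA (c • f) = c • indLp hA f := by
  apply Lp.ext
  filter_upwards [indLp_coeFn hA (c • f), indLp_coeFn hA f,
    Lp.coeFn_smul c f, Lp.coeFn_smul c (indLp hA f)] with x h1 h2 h3 h4
  rw [h1, h4, Pi.smul_apply, h2]
  by_cases hx : x ∈ A <;> simp_all [Set.indicator_apply]

theorem indLp_norm_le (hA : MeasurableSet A) (f : Lp ℂ P μ) : ‖indLp hA f‖ ≤ ‖f‖ := by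
  unfold indLp
  rw [Lp.norm_toLp, Lp.norm_def]
  exact ENNReal.toReal_mono (Lp.eLpNorm_ne_top f) (eLpNorm_indicator_le _)

noncomputable def indicatorCLM (hA : MeasurableSet A) : Lp ℂ P μ →L[ℂ] Lp ℂ P μ :=
  LinearMap.mkContinuous
    { toFun := indLp hA
      map_add' := indLp_add hA
      map_smul' := indLp_smul hA } 1
    (fun f => by simpa using indLp_norm_le hA f)

theorem indicatorCLM_coeFn (hA : MeasurableSet A) (f : Lp ℂ P μ) :
    (indicatorCLM hA f : α → ℂ) =ᵐ[μ] A.indicator ⇑f :=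
  indLp_coeFn hA f

end Ind

theorem le_rpow_inv_of_rpow_le {p a c : ℝ} (hp0 : 0 < p) (ha : 0 ≤ a)
    (h : a ^ p ≤ c) : a ≤ c ^ (1/p) := by
  calc a = (a ^ p) ^ (1/p) := by
        rw [← Real.rpow_mul ha, mul_one_div, div_self hp0.ne', Real.rpow_one]
  _ ≤ c ^ (1/p) := Real.rpow_le_rpow (Real.rpow_nonneg ha p) h (by positivity)

theorem lt_of_rpow_lt {p a c : ℝ} (hp0 : 0 < p) (hc : 0 < c)
    (h : a ^ p < c ^ p) : a < c := by
  by_contra hle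
  push_neg at hle
  exact absurd h (not_lt.2 (Real.rpow_le_rpow hc.le hle hp0.le))

end Stmt17Aux

/-- If `φ : S → L^p(Ω)` is a disintegration and `C ⊆ S` is an almost norm-maximizing chain,
then the subvector-infimum `g` of `φ[C]` exists, is the norm limit of `φ ν` as `ν` traverses
`C` in increasing order, and is either `0` or an atom of the subvector order. -/
theorem stmt17 {α : Type*} [MeasurableSpace α] (μ : Measure α) (p : ℝ) (hp : 1 ≤ p)
    [Fact (1 ≤ ENNReal.ofReal p)]
    (S : Set (List ℕ)) (φ : List ℕ → Lp ℂ (ENNReal.ofReal p) μ)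
    (hφ : Disintegration S φ) (C : Set (List ℕ)) (hC : ANMChain p S φ C)
    (hCne : C.Nonempty) :
    ∃ g : Lp ℂ (ENNReal.ofReal p) μ,
      (∀ ν ∈ C, Subvec g (φ ν)) ∧
      (∀ h : Lp ℂ (ENNReal.ofReal p) μ, (∀ ν ∈ C, Subvec h (φ ν)) → Subvec h g) ∧
      (∀ ε > (0 : ℝ), ∃ ν ∈ C, ∀ ν' ∈ C, ν <+: ν' → ‖φ ν' - g‖ < ε) ∧
      (g = 0 ∨ SubvecAtom g) := by
  classical
  obtain ⟨hTree, hinj, hnz, hsum, hsep, hdense⟩ := hφ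
  obtain ⟨hCS, hchain, hanm⟩ := hC
  have hp0 : (0:ℝ) < p := lt_of_lt_of_le one_pos hp
  have hcomp : ∀ a ∈ C, ∀ b ∈ C, a <+: b ∨ b <+: a := by
    intro a ha b hb
    rcases eq_or_ne a b with rfl | hne
    · exact Or.inl (List.prefix_refl a)
    · exact hchain ha hb hne
  have hmono : ∀ a ∈ C, ∀ b ∈ C, a <+: b → Subvec (φ b) (φ a) :=
    fun a _ b hb hab => Stmt17Aux.subvec_prefix hTree hsum hsep b (hCS hb) a hab
  haveI hCι : Nonempty C := hCne.to_subtype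
  set N : List ℕ → ℝ := fun τ => ‖φ τ‖ ^ p with hN
  set m : ℝ := ⨅ τ : C, N τ.1 with hm
  have hbdd : BddBelow (Set.range fun τ : C => N τ.1) := by
    refine ⟨0, ?_⟩
    rintro r ⟨τ, rfl⟩
    exact Real.rpow_nonneg (norm_nonneg _) p
  have hmle : ∀ τ ∈ C, m ≤ N τ := fun τ hτ => ciInf_le hbdd ⟨τ, hτ⟩
  have hseq : ∀ n : ℕ, ∃ τ : C, N τ.1 < m + 1/((n:ℝ)+1) := by
    intro n
    apply exists_lt_of_ciInf_lt
    rw [← hm]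
    have h9 : (0:ℝ) < 1/((n:ℝ)+1) := by positivity
    linarith
  choose ν hν using hseq
  have hdiff : ∀ a ∈ C, ∀ b ∈ C, a <+: b → ‖φ a - φ b‖ ^ p = N a - N b :=
    fun a ha b hb hab => Stmt17Aux.subvec_norm_sub hp (hmono a ha b hb hab)
  have hkey : ∀ j k : ℕ, j ≤ k → ‖φ (ν j).1 - φ (ν k).1‖ ^ p ≤ 1/((j:ℝ)+1) := by
    intro j k hjk
    rcases hcomp _ (ν j).2 _ (ν k).2 with h | h
    · rw [hdiff _ (ν j).2 _ (ν k).2 h]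
      have h8 := hmle _ (ν k).2
      have h9 := hν j
      linarith
    · rw [norm_sub_rev, hdiff _ (ν k).2 _ (ν j).2 h]
      have h8 := hmle _ (ν j).2
      have h9 := hν k
      have h3 : (1:ℝ)/((k:ℝ)+1) ≤ 1/((j:ℝ)+1) := by gcongr
      linarith
  have hcauchy : CauchySeq (fun n => φ (ν n).1) := by
    rw [Metric.cauchySeq_iff]
    intro ε hε
    obtain ⟨M, hM⟩ := exists_nat_one_div_lt (Real.rpow_pos_of_pos hε p)
    refine ⟨M, fun a ha b hb => ?_⟩
    rw [dist_eq_norm]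
    have hble : ‖φ (ν a).1 - φ (ν b).1‖ ^ p ≤ 1/((M:ℝ)+1) := by
      rcases le_total a b with hab | hab
      · refine le_trans (hkey a b hab) ?_
        have : (M:ℝ) ≤ (a:ℝ) := by exact_mod_cast ha
        gcongr
      · rw [norm_sub_rev]
        refine le_trans (hkey b a hab) ?_
        have : (M:ℝ) ≤ (b:ℝ) := by exact_mod_cast hb
        gcongr
    exact Stmt17Aux.lt_of_rpow_lt hp0 hε (lt_of_le_of_lt hble hM)
  obtain ⟨g, hg⟩ := cauchySeq_tendsto_of_complete hcauchy
  have hgn : ∀ n : ℕ, ‖φ (ν n).1 - g‖ ≤ (1/((n:ℝ)+1)) ^ (1/p) := by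
    intro n
    have hten : Tendsto (fun j => ‖φ (ν n).1 - φ (ν j).1‖) atTop (𝓝 ‖φ (ν n).1 - g‖) :=
      (tendsto_const_nhds.sub hg).norm
    refine le_of_tendsto hten ?_
    filter_upwards [eventually_ge_atTop n] with j hj
    exact Stmt17Aux.le_rpow_inv_of_rpow_le hp0 (norm_nonneg _) (hkey n j hj)
  have hrbound : Tendsto (fun n : ℕ => (1/((n:ℝ)+1)) ^ (1/p)) atTop (𝓝 0) := by
    have h9 := (tendsto_one_div_add_atTop_nhds_zero_nat).rpow_const
      (Or.inr (by positivity : (0:ℝ) ≤ 1/p))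
    rwa [Real.zero_rpow (by positivity : (1:ℝ)/p ≠ 0)] at h9
  have hlower : ∀ τ ∈ C, Subvec g (φ τ) := by
    intro τ hτ
    set ρ : ℕ → List ℕ := fun n => if τ <+: (ν n).1 then (ν n).1 else τ with hρ
    have hρC : ∀ n, ρ n ∈ C := by
      intro n; rw [hρ]; dsimp only; split
      exacts [(ν n).2, hτ]
    have hτρ : ∀ n, τ <+: ρ n := by
      intro n; rw [hρ]; dsimp only; split
      · assumption
      · exact List.prefix_refl τ
    have hνρ : ∀ n, (ν n).1 <+: ρ n := by
      intro n; rw [hρ]; dsimp only; split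
      case isTrue h => exact List.prefix_refl _
      case isFalse h =>
        rcases hcomp _ (ν n).2 _ hτ with h2 | h2
        · exact h2
        · exact absurd h2 h
    have hb1 : ∀ n, ‖φ (ρ n) - φ (ν n).1‖ ≤ (1/((n:ℝ)+1)) ^ (1/p) := by
      intro n
      rw [norm_sub_rev]
      apply Stmt17Aux.le_rpow_inv_of_rpow_le hp0 (norm_nonneg _)
      rw [hdiff _ (ν n).2 _ (hρC n) (hνρ n)]
      have h8 := hmle _ (hρC n)
      have h9 := hν n
      linarith
    have hrtend : Tendsto (fun n => φ (ρ n)) atTop (𝓝 g) := by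
      rw [tendsto_iff_dist_tendsto_zero]
      refine squeeze_zero (fun n => dist_nonneg) (fun n => ?_)
        (by simpa using hrbound.add hrbound : Tendsto
          (fun n : ℕ => (1/((n:ℝ)+1)) ^ (1/p) + (1/((n:ℝ)+1)) ^ (1/p)) atTop (𝓝 0))
      calc dist (φ (ρ n)) g ≤ dist (φ (ρ n)) (φ (ν n).1) + dist (φ (ν n).1) g :=
            dist_triangle _ _ _
      _ ≤ (1/((n:ℝ)+1)) ^ (1/p) + (1/((n:ℝ)+1)) ^ (1/p) := by
            rw [dist_eq_norm, dist_eq_norm]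
            exact add_le_add (hb1 n) (hgn n)
    exact Stmt17Aux.subvec_limit (fun n => hmono _ hτ _ (hρC n) (hτρ n)) hrtend
  have hinf : ∀ h : Lp ℂ (ENNReal.ofReal p) μ, (∀ τ ∈ C, Subvec h (φ τ)) → Subvec h g := by
    intro h hh
    obtain ⟨ns, -, hae⟩ := (tendstoInMeasure_of_tendsto_Lp hg).exists_seq_tendsto_ae
    choose B hB hBe using fun n => hh (ν n).1 (ν n).2
    refine ⟨{x | h x ≠ 0}, Stmt17Aux.measurableSet_ne h, ?_⟩
    filter_upwards [hae, ae_all_iff.2 hBe] with x hx hbx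
    by_cases hx0 : h x = 0
    · simp [Set.indicator_apply, hx0]
    · have hval : ∀ n, (h : α → ℂ) x = φ (ν n).1 x := by
        intro n
        have h9 := hbx n
        by_cases hxb : x ∈ B n
        · rw [h9, Set.indicator_of_mem hxb]
        · exact absurd (h9.trans (Set.indicator_of_notMem hxb _)) hx0
      have h1 : Tendsto (fun i => (φ (ν (ns i)).1 : α → ℂ) x) atTop (𝓝 (h x)) := by
        have h9 : (fun i => (φ (ν (ns i)).1 : α → ℂ) x) = fun _ => (h : α → ℂ) x :=
          funext fun i => (hval _).symm
        rw [h9]; exact tendsto_const_nhds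
      have h2 := tendsto_nhds_unique h1 hx
      rw [Set.indicator_of_mem (show x ∈ {x | (h : α → ℂ) x ≠ 0} from hx0)]
      exact h2
  have hlim : ∀ ε > (0:ℝ), ∃ τ ∈ C, ∀ τ' ∈ C, τ <+: τ' → ‖φ τ' - g‖ < ε := by
    intro ε hε
    have htz : Tendsto (fun n : ℕ => (1/((n:ℝ)+1)) ^ (1/p) + (1/((n:ℝ)+1)) ^ (1/p))
        atTop (𝓝 0) := by simpa using hrbound.add hrbound
    obtain ⟨n, hn⟩ := (htz.eventually (gt_mem_nhds hε)).exists
    refine ⟨(ν n).1, (ν n).2, fun τ' hτ' hpre => ?_⟩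
    have hb1 : ‖φ (ν n).1 - φ τ'‖ ^ p ≤ 1/((n:ℝ)+1) := by
      rw [hdiff _ (ν n).2 _ hτ' hpre]
      have h8 := hmle τ' hτ'
      have h9 := hν n
      linarith
    have hb1' : ‖φ τ' - φ (ν n).1‖ ≤ (1/((n:ℝ)+1)) ^ (1/p) := by
      rw [norm_sub_rev]
      exact Stmt17Aux.le_rpow_inv_of_rpow_le hp0 (norm_nonneg _) hb1
    calc ‖φ τ' - g‖ ≤ ‖φ τ' - φ (ν n).1‖ + ‖φ (ν n).1 - g‖ := by
          have h9 := dist_triangle (φ τ') (φ (ν n).1) g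
          simpa [dist_eq_norm] using h9
    _ ≤ (1/((n:ℝ)+1)) ^ (1/p) + (1/((n:ℝ)+1)) ^ (1/p) := add_le_add hb1' (hgn n)
    _ < ε := hn
  refine ⟨g, hlower, hinf, hlim, ?_⟩
  by_cases hg0 : g = 0
  · exact Or.inl hg0
  refine Or.inr ⟨hg0, ?_⟩
  intro h hsubg
  set A : Set α := {x | (g : α → ℂ) x ≠ 0} with hA_def
  have hA : MeasurableSet A := Stmt17Aux.measurableSet_ne g
  set T := Stmt17Aux.indicatorCLM (μ := μ) (P := ENNReal.ofReal p) hA with hT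
  have hgen : ∀ u ∈ φ '' S, T u ∈ (ℂ ∙ g) := by
    rintro _ ⟨μ', hμ', rfl⟩
    by_cases h1 : ∃ τ ∈ C, μ' <+: τ
    · obtain ⟨τ, hτ, hpre⟩ := h1
      have hsub : Subvec g (φ μ') :=
        Stmt17Aux.subvec_trans (hlower τ hτ)
          (Stmt17Aux.subvec_prefix hTree hsum hsep τ (hCS hτ) μ' hpre)
      have hTg : T (φ μ') = g := by
        apply Lp.ext
        obtain ⟨A', hA', hgA'⟩ := hsub
        filter_upwards [Stmt17Aux.indicatorCLM_coeFn hA (φ μ'), hgA'] with x h2 h3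
        rw [h2]
        by_cases hx : (g : α → ℂ) x = 0
        · rw [Set.indicator_of_notMem (show x ∉ A from fun hc => hc hx), hx]
        · have hxA : x ∈ A := hx
          rw [Set.indicator_of_mem hxA]
          by_cases hxA' : x ∈ A'
          · rw [Set.indicator_of_mem hxA'] at h3; exact h3.symm
          · rw [Set.indicator_of_notMem hxA'] at h3; exact absurd h3 hx
      rw [hTg]; exact Submodule.mem_span_singleton_self g
    · by_cases h2 : ∃ τ ∈ C, ¬ μ' <+: τ ∧ ¬ τ <+: μ'
      · obtain ⟨τ, hτ, hnp, hnp'⟩ := h2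
        have hsepμ := hsep μ' hμ' τ (hCS hτ) hnp hnp'
        obtain ⟨B', hB', hgB'⟩ := hlower τ hτ
        have hT0 : T (φ μ') = 0 := by
          apply Lp.ext
          filter_upwards [Stmt17Aux.indicatorCLM_coeFn hA (φ μ'), hsepμ, hgB',
            Lp.coeFn_zero ℂ (ENNReal.ofReal p) μ] with x e1 e2 e3 e4
          rw [e1, e4]
          by_cases hx : x ∈ A
          · have hgx : (g : α → ℂ) x ≠ 0 := hx
            have hτx : (φ τ : α → ℂ) x ≠ 0 := by
              intro hz
              apply hgx
              rw [e3]
              by_cases hxB : x ∈ B' <;> simp [Set.indicator_apply, hxB, hz]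
            have hμx : (φ μ' : α → ℂ) x = 0 := by
              have h9 : (φ μ' : α → ℂ) x * (φ τ : α → ℂ) x = 0 := by
                simpa using e2
              exact (mul_eq_zero.mp h9).resolve_right hτx
            rw [Set.indicator_of_mem hx, hμx]
            rfl
          · rw [Set.indicator_of_notMem hx]
            rfl
        rw [hT0]; exact Submodule.zero_mem _
      · exfalso
        push_neg at h1 h2
        have hallpre : ∀ τ ∈ C, τ <+: μ' := fun τ hτ => h2 τ hτ (h1 τ hτ)
        have hfin : C.Finite := by
          apply Set.Finite.subset (μ'.inits.toFinset.finite_toSet)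
          intro τ hτ
          simp only [Finset.coe_sort_coe, List.mem_toFinset, List.mem_inits, Finset.mem_coe]
          exact hallpre τ hτ
        obtain ⟨τm, hτmC, hτmax⟩ := Set.Finite.exists_maximalFor List.length C hfin hCne
        have hallm : ∀ τ ∈ C, τ <+: τm := by
          intro τ hτ
          rcases hcomp τ hτ τm hτmC with h | h
          · exact h
          · have heq : τm = τ := h.eq_of_length (le_antisymm h.length_le (hτmax hτ h.length_le))
            rw [heq]
        have hτμ : τm <+: μ' := hallpre τm hτmC
        have hneq : τm ≠ μ' := by
          intro heq
          exact h1 τm hτmC (heq ▸ List.prefix_refl μ')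
        obtain ⟨t, ht⟩ := hτμ
        have htne : t ≠ [] := by
          rintro rfl
          rw [List.append_nil] at ht
          exact hneq ht
        obtain ⟨a, t', rfl⟩ := List.exists_cons_of_ne_nil htne
        have hchild : τm ++ [a] ∈ S := by
          apply hTree μ' hμ'
          refine ⟨t', ?_⟩
          rw [← ht]; simp
        obtain ⟨k, hkC, -⟩ := hanm τm hτmC ⟨a, hchild⟩
        have h9 := (hallm _ hkC).length_le
        simp at h9
  have hTmem : ∀ f : Lp ℂ (ENNReal.ofReal p) μ, T f ∈ (ℂ ∙ g) := by
    intro f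
    have hle : Submodule.span ℂ (φ '' S) ≤ Submodule.comap T.toLinearMap (ℂ ∙ g) :=
      Submodule.span_le.2 fun u hu => Submodule.mem_comap.2 (hgen u hu)
    have hcl : IsClosed ((Submodule.comap T.toLinearMap (ℂ ∙ g) :
        Submodule ℂ (Lp ℂ (ENNReal.ofReal p) μ)) : Set (Lp ℂ (ENNReal.ofReal p) μ)) := by
      have h9 : ((Submodule.comap T.toLinearMap (ℂ ∙ g) :
          Submodule ℂ (Lp ℂ (ENNReal.ofReal p) μ)) : Set (Lp ℂ (ENNReal.ofReal p) μ))
          = ⇑T ⁻¹' ((ℂ ∙ g : Submodule ℂ (Lp ℂ (ENNReal.ofReal p) μ)) :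
            Set (Lp ℂ (ENNReal.ofReal p) μ)) := rfl
      rw [h9]
      exact ((ℂ ∙ g).closed_of_finiteDimensional).preimage T.continuous
    have hf : f ∈ closure ((Submodule.span ℂ (φ '' S) : Submodule ℂ _) : Set _) := hdense f
    exact closure_minimal (fun x hx => hle hx) hcl hf
  have hTh : T h = h := by
    apply Lp.ext
    obtain ⟨B, hB, hhB⟩ := hsubg
    filter_upwards [Stmt17Aux.indicatorCLM_coeFn hA h, hhB] with x e1 e2
    rw [e1]
    by_cases hx : x ∈ A
    · rw [Set.indicator_of_mem hx]
    · rw [Set.indicator_of_notMem hx, e2]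
      have hgx : (g : α → ℂ) x = 0 := not_not.mp (fun hc => hx hc)
      by_cases hxB : x ∈ B <;> simp [Set.indicator_apply, hxB, hgx]
  obtain ⟨c, hc⟩ := Submodule.mem_span_singleton.mp (hTmem h)
  rw [hTh] at hc
  have hc01 : c = 0 ∨ c = 1 := by
    by_contra hcc
    push_neg at hcc
    obtain ⟨hc0, hc1⟩ := hcc
    apply hg0
    apply Lp.ext
    obtain ⟨B, hB, hhB⟩ := hsubg
    have hch : (h : α → ℂ) =ᵐ[μ] fun x => c * (g x) := by
      rw [← hc]
      filter_upwards [Lp.coeFn_smul c g] with x e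
      rw [e, Pi.smul_apply, smul_eq_mul]
    filter_upwards [hhB, hch, Lp.coeFn_zero ℂ (ENNReal.ofReal p) μ] with x e1 e2 e3
    rw [e3]
    by_cases hgx : (g : α → ℂ) x = 0
    · exact hgx
    · exfalso
      by_cases hxB : x ∈ B
      · rw [Set.indicator_of_mem hxB] at e1
        have h9 : c * (g : α → ℂ) x = 1 * (g : α → ℂ) x := by
          rw [one_mul]
          exact (e1.symm.trans e2).symm
        exact hc1 (mul_right_cancel₀ hgx h9)
      · rw [Set.indicator_of_notMem hxB] at e1
        have h9 : c * (g : α → ℂ) x = 0 := (e1.symm.trans e2).symm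
        rcases mul_eq_zero.mp h9 with h' | h'
        exacts [hc0 h', hgx h']
  rcases hc01 with rfl | rfl
  · left; rw [← hc, zero_smul]
  · right; rw [← hc, one_smul]
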